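/- Let X and Y be complex Banach spaces, A ∈ B(X), B ∈ B(Y), C ∈ B(Y, X), and let M_C ∈ B(X ⊕ Y) be the upper-triangular operator matrix M_C(x, y) = (Ax + Cy, By). Then σ_r(M_C) ∪ S(B) = σ_r(A) ∪ σ_r(B) ∪ S(B), where σ_r denotes the right spectrum and S(B) the set of points where B fails to have the single valued extension property. -/

import Mathlib

noncomputable section

open ContinuousLinearMap Metric Set

variable {E : Type*} [NormedAddCommGroup E] [NormedSpace ℂ E]
variable {X Y : Type*} [NormedAddCommGroup X] [NormedSpace ℂ X] [CompleteSpace X]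
  [NormedAddCommGroup Y] [NormedSpace ℂ Y] [CompleteSpace Y]

/-- The right spectrum: points where `T - z` has no right inverse in `B(E)`. -/
def rightSpectrum (T : E →L[ℂ] E) : Set ℂ :=
  {z | ¬ ∃ S : E →L[ℂ] E, (T - z • 1) * S = 1}

/-- `T` has the single valued extension property at `z₀`. -/
def HasSVEPAt (T : E →L[ℂ] E) (z₀ : ℂ) : Prop :=
  ∃ r > (0 : ℝ), ∀ V : Set ℂ, V ⊆ ball z₀ r → IsOpen V →
    ∀ f : ℂ → E, AnalyticOnNhd ℂ f V → (∀ z ∈ V, (T - z • 1) (f z) = 0) →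
      ∀ z ∈ V, f z = 0

/-- `S(T)`: the set of points where `T` fails to have the SVEP. -/
def svepFail (T : E →L[ℂ] E) : Set ℂ :=
  {z | ¬ HasSVEPAt T z}

/-- The upper-triangular operator matrix `M_C (x, y) = (A x + C y, B y)` on `X ⊕ Y`. -/
def ucMat (A : X →L[ℂ] X) (B : Y →L[ℂ] Y) (C : Y →L[ℂ] X) :
    (X × Y) →L[ℂ] (X × Y) :=
  (A.comp (ContinuousLinearMap.fst ℂ X Y) + C.comp (ContinuousLinearMap.snd ℂ X Y)).prod
    (B.comp (ContinuousLinearMap.snd ℂ X Y))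

lemma ucMat_apply (A : X →L[ℂ] X) (B : Y →L[ℂ] Y) (C : Y →L[ℂ] X) (p : X × Y) :
    ucMat A B C p = (A p.1 + C p.2, B p.2) := rfl

/-- Part 1: right inverses of `A - z` and `B - z` give a right inverse of `M_C - z`. -/
lemma aux_r1 (A : X →L[ℂ] X) (B : Y →L[ℂ] Y) (C : Y →L[ℂ] X) (z : ℂ)
    (SA : X →L[ℂ] X) (hA : (A - z • 1) * SA = 1)
    (SB : Y →L[ℂ] Y) (hB : (B - z • 1) * SB = 1) :
    ∃ S : (X × Y) →L[ℂ] (X × Y), (ucMat A B C - z • 1) * S = 1 := by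
  refine ⟨ucMat SA SB (-(SA.comp (C.comp SB))), ?_⟩
  have hA' : ∀ x, (A - z • 1) (SA x) = x := fun x => by
    simpa [ContinuousLinearMap.mul_apply] using congrFun (congrArg DFunLike.coe hA) x
  have hB' : ∀ y, (B - z • 1) (SB y) = y := fun y => by
    simpa [ContinuousLinearMap.mul_apply] using congrFun (congrArg DFunLike.coe hB) y
  have happ : ∀ q : X × Y, (ucMat A B C - z • 1) q = ((A - z • 1) q.1 + C q.2, (B - z • 1) q.2) := by
    intro q
    refine Prod.ext ?_ ?_ <;>
      simp only [ucMat_apply, ContinuousLinearMap.sub_apply, ContinuousLinearMap.smul_apply,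
        ContinuousLinearMap.one_apply, Prod.fst_sub, Prod.snd_sub, Prod.smul_fst, Prod.smul_snd,
        ucMat_apply] <;> abel
  refine ContinuousLinearMap.ext fun p => ?_
  have hTp : (ucMat SA SB (-(SA.comp (C.comp SB)))) p = (SA p.1 + -(SA (C (SB p.2))), SB p.2) := by
    simp [ucMat_apply]
  rw [ContinuousLinearMap.mul_apply, hTp, happ]
  refine Prod.ext ?_ ?_
  · simp only [map_add, map_neg, hA' p.1, hA' (C (SB p.2)), ContinuousLinearMap.one_apply]
    abel
  · simp only [hB' p.2, ContinuousLinearMap.one_apply]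

/-- Part 2: a right inverse of `M_C - z` gives a right inverse of `B - z`. -/
lemma aux_r2 (A : X →L[ℂ] X) (B : Y →L[ℂ] Y) (C : Y →L[ℂ] X) (z : ℂ)
    (S : (X × Y) →L[ℂ] (X × Y)) (hS : (ucMat A B C - z • 1) * S = 1) :
    ∃ SB : Y →L[ℂ] Y, (B - z • 1) * SB = 1 := by
  refine ⟨(ContinuousLinearMap.snd ℂ X Y).comp (S.comp (ContinuousLinearMap.inr ℂ X Y)), ?_⟩
  have h : ∀ p, (ucMat A B C - z • 1) (S p) = p := fun p => by
    simpa [ContinuousLinearMap.mul_apply] using congrFun (congrArg DFunLike.coe hS) p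
  ext y
  have := congrArg Prod.snd (h (0, y))
  simpa [ucMat_apply, ContinuousLinearMap.mul_apply] using this

set_option maxHeartbeats 1000000 in
/-- Part 3: if `M_C - z₀` is right invertible and `B` has SVEP at `z₀`,
then `A - z₀` is right invertible. -/
lemma aux_r3 (A : X →L[ℂ] X) (B : Y →L[ℂ] Y) (C : Y →L[ℂ] X) (z₀ : ℂ)
    (S : (X × Y) →L[ℂ] (X × Y)) (hS : (ucMat A B C - z₀ • 1) * S = 1)
    (hsvep : HasSVEPAt B z₀) :
    ∃ SA : X →L[ℂ] X, (A - z₀ • 1) * SA = 1 := by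
  obtain ⟨r, hr, hB⟩ := hsvep
  set M := ucMat A B C with hM
  set ρ : ℝ := min r (1 / (‖S‖ + 1)) with hρ
  have hSpos : (0:ℝ) < ‖S‖ + 1 := by positivity
  have hρpos : 0 < ρ := lt_min hr (by positivity)
  set V : Set ℂ := ball z₀ ρ with hV
  -- units
  have hunit : ∀ μ ∈ V, IsUnit ((1 : (X × Y) →L[ℂ] (X × Y)) - (μ - z₀) • S) := by
    intro μ hμ
    have hn : ‖(μ - z₀) • S‖ < 1 := by
      have h1 : ‖μ - z₀‖ < ρ := by simpa [hV, dist_eq_norm] using hμ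
      have h2 : ρ ≤ 1 / (‖S‖ + 1) := min_le_right _ _
      calc ‖(μ - z₀) • S‖ ≤ ‖μ - z₀‖ * ‖S‖ := ContinuousLinearMap.opNorm_smul_le _ _
        _ ≤ (1 / (‖S‖ + 1)) * ‖S‖ := by
            apply mul_le_mul_of_nonneg_right (le_of_lt (lt_of_lt_of_le h1 h2)) (norm_nonneg _)
        _ < 1 := by
            rw [div_mul_eq_mul_div, one_mul, div_lt_one hSpos]; linarith
    exact ⟨Units.oneSub _ hn, rfl⟩
  set g : ℂ → (X × Y) →L[ℂ] (X × Y) :=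
    fun μ => S * Ring.inverse ((1 : (X × Y) →L[ℂ] (X × Y)) - (μ - z₀) • S) with hg
  -- right-inverse property of g μ
  have hginv : ∀ μ ∈ V, (M - μ • 1) * g μ = 1 := by
    intro μ hμ
    have key : (M - μ • 1) * S = (1 : (X × Y) →L[ℂ] (X × Y)) - (μ - z₀) • S := by
      have : M - μ • 1 = (M - z₀ • 1) - (μ - z₀) • 1 := by
        refine ContinuousLinearMap.ext fun q => ?_
        simp only [ContinuousLinearMap.sub_apply, ContinuousLinearMap.smul_apply,
          ContinuousLinearMap.one_apply]
        module
      rw [this, sub_mul, hS, smul_mul_assoc, one_mul]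
    rw [hg, ← mul_assoc, key]
    exact Ring.mul_inverse_cancel _ (hunit μ hμ)
  -- analyticity of g on V
  have hganal : AnalyticOnNhd ℂ g V := by
    intro μ hμ
    apply analyticAt_const.mul
    have hinner : AnalyticAt ℂ
        (fun μ : ℂ => (1 : (X × Y) →L[ℂ] (X × Y)) - (μ - z₀) • S) μ :=
      analyticAt_const.sub ((analyticAt_id.sub analyticAt_const).smul analyticAt_const)
    have h := analyticAt_inverse (𝕜 := ℂ) (hunit μ hμ).unit
    rw [IsUnit.unit_spec] at h
    exact AnalyticAt.comp (f := fun μ : ℂ => (1 : (X × Y) →L[ℂ] (X × Y)) - (μ - z₀) • S) h hinner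
  -- apply SVEP to each coordinate function
  have hzero : ∀ x : X, (S (x, 0)).2 = 0 := by
    intro x
    set L : ((X × Y) →L[ℂ] (X × Y)) →L[ℂ] Y :=
      (ContinuousLinearMap.snd ℂ X Y).comp (ContinuousLinearMap.apply ℂ (X × Y) (x, 0)) with hL
    set f : ℂ → Y := fun μ => L (g μ) with hf
    have hfanal : AnalyticOnNhd ℂ f V := fun μ hμ => (L.analyticAt _).comp (hganal μ hμ)
    have hfeq : ∀ μ ∈ V, (B - μ • 1) (f μ) = 0 := by
      intro μ hμ
      have h1 : (M - μ • 1) ((g μ) (x, 0)) = (x, 0) := by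
        simpa [ContinuousLinearMap.mul_apply] using
          congrFun (congrArg DFunLike.coe (hginv μ hμ)) (x, 0)
      have h2 := congrArg Prod.snd h1
      simpa [hM, ucMat_apply, hf, hL] using h2
    have hsub : V ⊆ ball z₀ r := ball_subset_ball (min_le_left _ _)
    have h5 : L (g z₀) = 0 := hB V hsub isOpen_ball f hfanal hfeq z₀ (mem_ball_self hρpos)
    have hg0 : g z₀ = S := by
      simp [hg]
    rw [hg0] at h5
    simpa [hL] using h5
  -- conclude
  refine ⟨(ContinuousLinearMap.fst ℂ X Y).comp (S.comp (ContinuousLinearMap.inl ℂ X Y)), ?_⟩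
  have h : ∀ p, (ucMat A B C - z₀ • 1) (S p) = p := fun p => by
    simpa [ContinuousLinearMap.mul_apply] using congrFun (congrArg DFunLike.coe hS) p
  ext x
  have h1 := congrArg Prod.fst (h (x, 0))
  simp only [ucMat_apply, ContinuousLinearMap.sub_apply, ContinuousLinearMap.smul_apply,
    ContinuousLinearMap.one_apply] at h1
  rw [hzero x] at h1
  simp only [map_zero, add_zero] at h1
  simpa [ContinuousLinearMap.mul_apply, ucMat_apply] using h1

theorem stmt9 (A : X →L[ℂ] X) (B : Y →L[ℂ] Y) (C : Y →L[ℂ] X) :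
    rightSpectrum (ucMat A B C) ∪ svepFail B =
      rightSpectrum A ∪ rightSpectrum B ∪ svepFail B := by
  ext z
  simp only [mem_union, rightSpectrum, svepFail, mem_setOf_eq]
  constructor
  · rintro (hM | hB)
    · by_cases hA : ∃ SA : X →L[ℂ] X, (A - z • 1) * SA = 1
      · by_cases hBr : ∃ SB : Y →L[ℂ] Y, (B - z • 1) * SB = 1
        · obtain ⟨SA, hSA⟩ := hA
          obtain ⟨SB, hSB⟩ := hBr
          exact absurd (aux_r1 A B C z SA hSA SB hSB) hM
        · exact Or.inl (Or.inr hBr)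
      · exact Or.inl (Or.inl hA)
    · exact Or.inr hB
  · rintro ((hA | hB) | hB)
    · by_cases hM : ∃ S : (X × Y) →L[ℂ] (X × Y), (ucMat A B C - z • 1) * S = 1
      · by_cases hsvep : HasSVEPAt B z
        · obtain ⟨S, hS⟩ := hM
          exact absurd (aux_r3 A B C z S hS hsvep) hA
        · exact Or.inr hsvep
      · exact Or.inl hM
    · refine Or.inl fun ⟨S, hS⟩ => hB (aux_r2 A B C z S hS)
    · exact Or.inr hB
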